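/- For n ≥ 4, there exists a family of n−2 pairwise vertex-disjoint edges (K_2-structures) of Q_n and two vertices x, y of Q_n avoiding these edges, such that every path from x to y in Q_n avoiding all the removed edges' endpoints has length at least n+1. -/

import Mathlib

open SimpleGraph

/-- The `n`-dimensional hypercube: vertices are `Fin n → Bool`,
adjacent iff Hamming distance is `1`. -/
def Q (n : ℕ) : SimpleGraph (Fin n → Bool) where
  Adj u v := hammingDist u v = 1
  symm := ⟨fun u v h => by simpa [hammingDist_comm] using h⟩
  loopless := ⟨fun u h => by simp [hammingDist_self] at h⟩

/-- Flip the `i`-th bit of `x`. -/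
def flipBit {n : ℕ} (x : Fin n → Bool) (i : Fin n) : Fin n → Bool :=
  Function.update x i (!x i)

/-- `S` is a subcube of dimension exactly `m` (fixing `n - m` coordinates). -/
def IsSubcube {n : ℕ} (m : ℕ) (S : Set (Fin n → Bool)) : Prop :=
  ∃ A : Finset (Fin n), A.card = n - m ∧ ∃ p : Fin n → Bool,
    S = {x | ∀ i ∈ A, x i = p i}

/-- `S` is a subcube of dimension at most `m` (fixing at least `n - m` coordinates). -/
def IsSubcubeLe {n : ℕ} (m : ℕ) (S : Set (Fin n → Bool)) : Prop :=
  ∃ A : Finset (Fin n), n - m ≤ A.card ∧ ∃ p : Fin n → Bool,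
    S = {x | ∀ i ∈ A, x i = p i}

open Finset

lemma adj_flip {n : ℕ} {u w : Fin n → Bool} (h : (Q n).Adj u w) :
    ∃ j, w = flipBit u j := by
  have h' : ({i | u i ≠ w i} : Finset (Fin n)).card = 1 := h
  obtain ⟨j, hj⟩ := Finset.card_eq_one.mp h'
  refine ⟨j, funext fun k => ?_⟩
  by_cases hk : k = j
  · subst hk
    have hm : k ∈ ({i | u i ≠ w i} : Finset (Fin n)) := hj ▸ Finset.mem_singleton_self _
    have : u k ≠ w k := by simpa using hm
    simp only [flipBit, Function.update_self]
    revert this; cases u k <;> cases w k <;> simp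
  · have hm : k ∉ ({i | u i ≠ w i} : Finset (Fin n)) := by
      rw [hj]; simpa using hk
    have : u k = w k := by simpa using hm
    simp [flipBit, Function.update_of_ne hk, this]

lemma hd_flip {n : ℕ} (u v : Fin n → Bool) (j : Fin n) :
    (u j ≠ v j ∧ hammingDist u v = hammingDist (flipBit u j) v + 1) ∨
    (u j = v j ∧ hammingDist (flipBit u j) v = hammingDist u v + 1) := by
  have key : ∀ k, k ≠ j → (flipBit u j k ≠ v k ↔ u k ≠ v k) := by
    intro k hk; rw [flipBit, Function.update_of_ne hk]
  by_cases h : u j = v j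
  · right
    refine ⟨h, ?_⟩
    have hT : ({i | flipBit u j i ≠ v i} : Finset (Fin n)) =
        insert j ({i | u i ≠ v i} : Finset (Fin n)) := by
      ext k
      by_cases hk : k = j
      · subst hk
        simp only [Finset.mem_filter, Finset.mem_univ, true_and, Finset.mem_insert]
        have : flipBit u k k = !u k := by simp [flipBit]
        rw [this, ← h]
        cases u k <;> simp
      · simp only [Finset.mem_filter, Finset.mem_univ, true_and, Finset.mem_insert, hk,
          false_or]
        exact key k hk
    have hj : j ∉ ({i | u i ≠ v i} : Finset (Fin n)) := by simp [h]
    show ({i | flipBit u j i ≠ v i} : Finset (Fin n)).card = _ + 1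
    rw [hT, Finset.card_insert_of_notMem hj]
    rfl
  · left
    refine ⟨h, ?_⟩
    have hT : ({i | flipBit u j i ≠ v i} : Finset (Fin n)) =
        ({i | u i ≠ v i} : Finset (Fin n)).erase j := by
      ext k
      by_cases hk : k = j
      · subst hk
        have hval : flipBit u k k = !u k := by simp [flipBit]
        simp only [Finset.mem_filter, Finset.mem_univ, true_and, Finset.mem_erase, ne_eq,
          not_true_eq_false, false_and, iff_false, hval]
        revert h; cases u k <;> cases v k <;> simp
      · simp only [Finset.mem_filter, Finset.mem_univ, true_and, Finset.mem_erase, ne_eq, hk,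
          not_false_eq_true, true_and]
        exact key k hk
    have hj : j ∈ ({i | u i ≠ v i} : Finset (Fin n)) := by simp [h]
    show hammingDist u v = ({i | flipBit u j i ≠ v i} : Finset (Fin n)).card + 1
    rw [hT, Finset.card_erase_of_mem hj]
    have h1 : 1 ≤ hammingDist u v := Finset.card_pos.mpr ⟨j, hj⟩
    have h2 : hammingDist u v = ({i | u i ≠ v i} : Finset (Fin n)).card := rfl
    omega

lemma walk_parity {n : ℕ} {v : Fin n → Bool} :
    ∀ {u : Fin n → Bool} (p : (Q n).Walk u v), ∃ k, p.length = hammingDist u v + 2 * k := by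
  intro u p
  induction p with
  | nil => exact ⟨0, by simp [hammingDist_self]⟩
  | @cons u w v h q ih =>
    obtain ⟨k, hk⟩ := ih
    obtain ⟨j, rfl⟩ := adj_flip h
    rcases hd_flip u v j with ⟨-, he⟩ | ⟨-, he⟩
    · exact ⟨k, by simp [Walk.length_cons]; omega⟩
    · exact ⟨k + 1, by simp [Walk.length_cons]; omega⟩

/-- step of a geodesic walk -/
lemma geodesic_step {n : ℕ} {u w v : Fin n → Bool} (h : (Q n).Adj u w)
    (q : (Q n).Walk w v) (hlen : q.length + 1 = hammingDist u v) :
    ∃ j, w = flipBit u j ∧ u j ≠ v j ∧ q.length = hammingDist w v := by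
  obtain ⟨j, rfl⟩ := adj_flip h
  obtain ⟨k, hk⟩ := walk_parity q
  rcases hd_flip u v j with ⟨hne, he⟩ | ⟨heq, he⟩
  · exact ⟨j, rfl, hne, by omega⟩
  · exfalso; omega

section Construction
variable {n : ℕ}

def xV (n : ℕ) : Fin n → Bool := fun _ => false

def LV (n : ℕ) [NeZero n] : Fin n := ⟨n - 1, Nat.sub_lt (Nat.pos_of_ne_zero (NeZero.ne n)) one_pos⟩

def yV (n : ℕ) [NeZero n] : Fin n → Bool := fun i => decide (i ≠ LV n)

def eV {n : ℕ} (i : Fin n) : Fin n → Bool := fun k => decide (k = i)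

def fV {n : ℕ} [NeZero n] (i : Fin n) : Fin n → Bool := fun k => decide (k = i ∨ k = 0)

set_option linter.unusedSectionVars false
variable [NeZero n]

lemma LV_val : (LV n : ℕ) = n - 1 := rfl

lemma eV_ne_xV (i : Fin n) : eV i ≠ xV n := by
  intro h; have := congrFun h i; simp [eV, xV] at this

lemma fV_ne_xV (i : Fin n) : fV i ≠ xV n := by
  intro h; have := congrFun h 0; simp [fV, xV] at this

lemma eV_ne_eV {i j : Fin n} (hij : i ≠ j) : eV i ≠ eV j := by
  intro h; have := congrFun h i; simp [eV, hij] at this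

lemma eV_ne_fV {i j : Fin n} (hj : j ≠ 0) : eV j ≠ fV i := by
  intro h; have := congrFun h 0; simp [eV, fV, hj.symm] at this

lemma fV_ne_fV {i j : Fin n} (hi : i ≠ 0) (hij : i ≠ j) : fV i ≠ fV j := by
  intro h; have := congrFun h i; simp [fV, hij, hi] at this

lemma yV_ne_eV {i : Fin n} (hi : i ≠ 0) (hn : 4 ≤ n) : yV n ≠ eV i := by
  intro h; have := congrFun h 0
  have h0 : (0 : Fin n) ≠ LV n := by
    intro hc
    have := congrArg Fin.val hc
    simp [LV_val] at this
    omega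
  simp [yV, eV, h0, hi.symm] at this

lemma yV_ne_fV {i : Fin n} (hn : 4 ≤ n) : yV n ≠ fV i := by
  intro h
  have h1 : (1 : ℕ) < n := by omega
  have h2 : (2 : ℕ) < n := by omega
  set j : Fin n := if i = ⟨1, h1⟩ then ⟨2, h2⟩ else ⟨1, h1⟩ with hj
  have hji : j ≠ i := by
    rw [hj]; split
    · rename_i hcase; rw [hcase]; intro hc
      have := congrArg Fin.val hc; simp at this
    · rename_i hcase; exact fun hc => hcase hc.symm
  have hj0 : j ≠ 0 := by
    rw [hj]; split <;> · intro hc; have := congrArg Fin.val hc; simp at this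
  have hjL : j ≠ LV n := by
    rw [hj]; split <;> · intro hc; have := congrArg Fin.val hc; simp [LV_val] at this; omega
  have := congrFun h j
  simp [yV, fV, hji, hj0, hjL] at this

lemma flipBit_xV (j : Fin n) : flipBit (xV n) j = eV j := by
  funext k
  by_cases hk : k = j
  · subst hk; simp [flipBit, xV, eV]
  · simp [flipBit, Function.update_of_ne hk, xV, eV, hk]

lemma flipBit_flipBit_xV {m : Fin n} (hm : m ≠ 0) :
    flipBit (flipBit (xV n) 0) m = fV m := by
  funext k
  by_cases hk : k = m
  · subst hk
    have h1 : flipBit (xV n) 0 k = false := by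
      simp [flipBit, Function.update_of_ne hm, xV]
    have h2 : flipBit (flipBit (xV n) 0) k k = !(flipBit (xV n) 0 k) := by
      simp [flipBit]
    rw [h2, h1]
    simp [fV]
  · by_cases hk0 : k = 0
    · subst hk0
      simp [flipBit, Function.update_of_ne (Ne.symm hm), Function.update_self, xV, fV]
    · simp [flipBit, Function.update_of_ne hk, Function.update_of_ne hk0, xV, fV, hk, hk0]

lemma hd_xV_yV (hn : 4 ≤ n) : hammingDist (xV n) (yV n) = n - 1 := by
  have hfilt : ({i | xV n i ≠ yV n i} : Finset (Fin n)) = Finset.univ.erase (LV n) := by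
    ext i
    by_cases hi : i = LV n <;> simp [xV, yV, hi]
  show ({i | xV n i ≠ yV n i} : Finset (Fin n)).card = n - 1
  rw [hfilt, Finset.card_erase_of_mem (Finset.mem_univ _), Finset.card_univ, Fintype.card_fin]

end Construction

lemma no_short_walk {n : ℕ} [NeZero n] (hn : 4 ≤ n) (p : (Q n).Walk (xV n) (yV n))
    (hav : ∀ w ∈ p.support, ∀ i : Fin n, i ≠ 0 → i ≠ LV n → w ≠ eV i ∧ w ≠ fV i) :
    p.length ≠ n - 1 := by
  intro hlen
  have h0L : (0 : Fin n) ≠ LV n := by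
    intro hc; have := congrArg Fin.val hc; simp [LV_val] at this; omega
  have hxy : xV n ≠ yV n := by
    intro hc
    have := hd_xV_yV (n := n) hn
    rw [hc, hammingDist_self] at this; omega
  obtain ⟨w1, h1, q1, rfl⟩ := Walk.exists_eq_cons_of_ne hxy p
  simp only [Walk.length_cons] at hlen
  obtain ⟨j, hw1, hxj, hq1⟩ := geodesic_step h1 q1 (by rw [hd_xV_yV hn]; omega)
  subst hw1
  have hjL : j ≠ LV n := by
    intro hc; subst hc; simp [xV, yV] at hxj
  by_cases hj0 : j = 0
  · subst hj0
    have hw1y : flipBit (xV n) 0 ≠ yV n := by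
      intro hc
      have hz : hammingDist (flipBit (xV n) 0) (yV n) = 0 := by rw [hc, hammingDist_self]
      omega
    obtain ⟨w2, h2, q2, rfl⟩ := Walk.exists_eq_cons_of_ne hw1y q1
    simp only [Walk.length_cons] at hlen hq1
    obtain ⟨m, hw2, hw1m, hq2⟩ := geodesic_step h2 q2 hq1
    have hw1e : flipBit (xV n) (0 : Fin n) = eV 0 := flipBit_xV 0
    rw [hw1e] at hw1m
    have hm0 : m ≠ 0 := by
      intro hc; subst hc
      simp [eV, yV, h0L] at hw1m
    have hmL : m ≠ LV n := by
      intro hc; subst hc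
      simp [eV, yV, Ne.symm h0L] at hw1m
    have hw2f : w2 = fV m := by rw [hw2, flipBit_flipBit_xV hm0]
    have hw2mem : w2 ∈ (Walk.cons h1 (Walk.cons h2 q2)).support := by
      simp only [Walk.support_cons, List.mem_cons]
      exact Or.inr (Or.inr (Walk.start_mem_support q2))
    exact (hav w2 hw2mem m hm0 hmL).2 hw2f
  · have hw1mem : flipBit (xV n) j ∈ (Walk.cons h1 q1).support := by
      simp only [Walk.support_cons, List.mem_cons]
      exact Or.inr (Walk.start_mem_support q1)
    exact (hav _ hw1mem j hj0 hjL).1 (flipBit_xV j)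

theorem K2_structure_lower_bound (n : ℕ) (hn : 4 ≤ n) :
    ∃ F : Finset (Set (Fin n → Bool)), F.card = n - 2 ∧
      (∀ S ∈ F, ∃ a b : Fin n → Bool, (Q n).Adj a b ∧ S = {a, b}) ∧
      (∀ S ∈ F, ∀ T ∈ F, S ≠ T → Disjoint S T) ∧
      ∃ x y : Fin n → Bool,
        x ∉ ⋃₀ (↑F : Set (Set (Fin n → Bool))) ∧
        y ∉ ⋃₀ (↑F : Set (Set (Fin n → Bool))) ∧
        ∀ p : (Q n).Walk x y, p.IsPath →
          (∀ w ∈ p.support, w ∉ ⋃₀ (↑F : Set (Set (Fin n → Bool)))) →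
          n + 1 ≤ p.length := by
  haveI : NeZero n := ⟨by omega⟩
  classical
  set F : Finset (Set (Fin n → Bool)) :=
    (Finset.Ioo (0 : Fin n) (LV n)).image
      (fun i => ({eV i, fV i} : Set (Fin n → Bool))) with hF
  have hmemIoo : ∀ i : Fin n, i ∈ Finset.Ioo (0 : Fin n) (LV n) ↔ i ≠ 0 ∧ i ≠ LV n := by
    intro i
    rw [Finset.mem_Ioo, Fin.lt_def, Fin.lt_def, Fin.val_zero, LV_val]
    have hlt := i.isLt
    constructor
    · rintro ⟨h1, h2⟩
      refine ⟨fun hc => ?_, fun hc => ?_⟩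
      · rw [hc] at h1; simp at h1
      · rw [hc] at h2; simp [LV_val] at h2
    · rintro ⟨h1, h2⟩
      have hv1 : (i : ℕ) ≠ 0 := fun hc => h1 (Fin.ext (by simp [hc]))
      have hv2 : (i : ℕ) ≠ n - 1 := fun hc => h2 (Fin.ext (by simp [hc, LV_val]))
      omega
  refine ⟨F, ?_, ?_, ?_, xV n, yV n, ?_, ?_, ?_⟩
  · -- card
    have hinj : Set.InjOn (fun i => ({eV i, fV i} : Set (Fin n → Bool)))
        ↑(Finset.Ioo (0 : Fin n) (LV n)) := by
      intro i hi j hj hij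
      obtain ⟨hi0, -⟩ := (hmemIoo i).mp (Finset.mem_coe.mp hi)
      by_contra hne
      have hij' : ({eV i, fV i} : Set (Fin n → Bool)) = {eV j, fV j} := hij
      have hmem : eV i ∈ ({eV j, fV j} : Set (Fin n → Bool)) := by
        rw [← hij']; left; rfl
      rcases hmem with h | h
      · exact eV_ne_eV hne h
      · exact eV_ne_fV hi0 h
    rw [hF, Finset.card_image_of_injOn hinj, Fin.card_Ioo, LV_val]
    simp only [Fin.val_zero]
    omega
  · -- edges
    intro S hS
    obtain ⟨i, hi, rfl⟩ := Finset.mem_image.mp hS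
    obtain ⟨hi0, -⟩ := (hmemIoo i).mp hi
    refine ⟨eV i, fV i, ?_, rfl⟩
    show hammingDist (eV i) (fV i) = 1
    have hfilt : ({k | eV i k ≠ fV i k} : Finset (Fin n)) = {(0 : Fin n)} := by
      ext k
      by_cases hk : k = i
      · subst hk
        simp [eV, fV, hi0]
      · by_cases hk0 : k = 0 <;> simp [eV, fV, hk, hk0, Ne.symm hi0]
    show ({k | eV i k ≠ fV i k} : Finset (Fin n)).card = 1
    rw [hfilt, Finset.card_singleton]
  · -- disjoint
    intro S hS T hT hST
    obtain ⟨i, hi, rfl⟩ := Finset.mem_image.mp hS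
    obtain ⟨j, hj, rfl⟩ := Finset.mem_image.mp hT
    obtain ⟨hi0, -⟩ := (hmemIoo i).mp hi
    obtain ⟨hj0, -⟩ := (hmemIoo j).mp hj
    have hij : i ≠ j := fun hc => hST (by rw [hc])
    rw [Set.disjoint_left]
    rintro a (rfl | rfl) (h | h)
    · exact eV_ne_eV hij h
    · exact eV_ne_fV hi0 h
    · exact (eV_ne_fV hj0) h.symm
    · exact fV_ne_fV hi0 hij h
  · -- x not in union
    rintro ⟨S, hS, hxS⟩
    obtain ⟨i, hi, rfl⟩ := Finset.mem_image.mp (Finset.mem_coe.mp hS)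
    rcases hxS with h | h
    · exact eV_ne_xV i h.symm
    · exact fV_ne_xV i h.symm
  · -- y not in union
    rintro ⟨S, hS, hyS⟩
    obtain ⟨i, hi, rfl⟩ := Finset.mem_image.mp (Finset.mem_coe.mp hS)
    obtain ⟨hi0, -⟩ := (hmemIoo i).mp hi
    rcases hyS with h | h
    · exact yV_ne_eV hi0 hn h
    · exact yV_ne_fV hn h
  · -- main bound
    intro p hp hav
    obtain ⟨k, hk⟩ := walk_parity p
    rw [hd_xV_yV hn] at hk
    rcases Nat.eq_zero_or_pos k with rfl | hkpos
    · exfalso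
      refine no_short_walk hn p ?_ (by omega)
      intro w hw i hi0 hiL
      have hSF : ({eV i, fV i} : Set (Fin n → Bool)) ∈ (↑F : Set (Set (Fin n → Bool))) :=
        Finset.mem_coe.mpr (Finset.mem_image.mpr ⟨i, (hmemIoo i).mpr ⟨hi0, hiL⟩, rfl⟩)
      constructor
      · intro hc; exact hav w hw ⟨_, hSF, by rw [hc]; left; rfl⟩
      · intro hc; exact hav w hw ⟨_, hSF, by rw [hc]; right; rfl⟩
    · omega
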